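/- arXiv:1806.03259 — 2 statements merged into one kernel-verified Lean document; each statement's English description precedes it below -/
import Mathlib

section
/- Fix an integer k ≥ 2, let φ_k^min = arccos(1 − (2 − 2cos(π/(2k+1)))/(1 − cos(π/(2k−1)))), and let φ ∈ (φ_k^min, π]. Then the function λ ↦ P_k^φ(λ) is strictly increasing on [sin²(π/(4k+2)), λ_{k,1}^{φ,max}] and strictly decreasing on [λ_{k,1}^{φ,max}, sin²(π/(4k−2))], where λ_{k,1}^{φ,max} = (1 − cos(π/(2k+1)))/(1 − cos φ). -/
/-- The success probability `P_k^φ(λ)` of the matched-phase Grover algorithm after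
`k` iterations: `P_k^φ(λ) = A·cos((2k+1)δ) + B` where `θ = arcsin √λ`,
`δ = arccos (1 − λ(1 − cos φ))`, `A = (sin²θ/sin²δ)(cos φ − cos δ)` and
`B = (sin²θ/sin²δ)(1 − cos φ·cos δ)`. -/
noncomputable def grovP (k : ℕ) (φ lam : ℝ) : ℝ :=
  let θ : ℝ := Real.arcsin (Real.sqrt lam)
  let δ : ℝ := Real.arccos (1 - lam * (1 - Real.cos φ))
  let A : ℝ := Real.sin θ ^ 2 / Real.sin δ ^ 2 * (Real.cos φ - Real.cos δ)
  let B : ℝ := Real.sin θ ^ 2 / Real.sin δ ^ 2 * (1 - Real.cos φ * Real.cos δ)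
  A * Real.cos ((2 * (k : ℝ) + 1) * δ) + B

/-- `φ_k^min = arccos(1 − (2 − 2cos(π/(2k+1)))/(1 − cos(π/(2k−1))))`. -/
noncomputable def phiMin (k : ℕ) : ℝ :=
  Real.arccos (1 - (2 - 2 * Real.cos (Real.pi / (2 * (k : ℝ) + 1))) /
    (1 - Real.cos (Real.pi / (2 * (k : ℝ) - 1))))

open Real in
lemma two_sin_sq_half (x : ℝ) : 1 - Real.cos x = 2 * Real.sin (x/2)^2 := by
  have h := Real.cos_two_mul (x/2)
  rw [show 2*(x/2) = x by ring] at h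
  rw [h, Real.cos_sq']; ring

open Real in
lemma arccos_form (s : ℝ) (h0 : 0 ≤ s) (h1 : s ≤ 1) :
    Real.arccos (1 - 2*s) = 2 * Real.arcsin (Real.sqrt s) := by
  have hu0 : 0 ≤ arcsin (√s) := Real.arcsin_nonneg.2 (Real.sqrt_nonneg _)
  have hu2 : arcsin (√s) ≤ π/2 := Real.arcsin_le_pi_div_two _
  have hsin : Real.sin (arcsin (√s)) = √s :=
    Real.sin_arcsin (le_trans (by norm_num) (Real.sqrt_nonneg _)) (Real.sqrt_le_one.2 h1)
  have hcos : Real.cos (2 * arcsin (√s)) = 1 - 2*s := by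
    rw [Real.cos_two_mul, Real.cos_sq', hsin, Real.sq_sqrt h0]; ring
  rw [← hcos, Real.arccos_cos (by linarith) (by linarith)]

open Real in
lemma grovP_eq (k : ℕ) (φ lam q : ℝ) (hq : Real.cos φ = 1 - 2*q)
    (h0 : 0 < lam) (h1 : lam ≤ 1) (hq0 : 0 < q) (hs1 : lam * q < 1) :
    grovP k φ lam
      = 1 - (1 - lam)/(1 - lam*q)
          * Real.cos ((2*(k:ℝ)+1) * Real.arcsin (Real.sqrt (lam*q)))^2 := by
  have hs0 : 0 < lam*q := mul_pos h0 hq0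
  set u := Real.arcsin (Real.sqrt (lam*q)) with hu
  have hδ : Real.arccos (1 - lam*(1 - Real.cos φ)) = 2*u := by
    rw [hq, show 1 - lam*(1-(1-2*q)) = 1 - 2*(lam*q) by ring, arccos_form _ hs0.le hs1.le]
  have hθ : Real.sin (Real.arcsin (Real.sqrt lam)) ^ 2 = lam := by
    rw [Real.sin_arcsin (le_trans (by norm_num) (Real.sqrt_nonneg _)) (Real.sqrt_le_one.2 h1),
      Real.sq_sqrt h0.le]
  have hcosu : Real.cos (2*u) = 1 - 2*(lam*q) := by
    rw [Real.cos_two_mul, Real.cos_sq',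
      Real.sin_arcsin (le_trans (by norm_num) (Real.sqrt_nonneg _)) (Real.sqrt_le_one.2 hs1.le),
      Real.sq_sqrt hs0.le]; ring
  have hsinδ : Real.sin (2*u) ^ 2 = 4*(lam*q)*(1 - lam*q) := by
    rw [Real.sin_sq, hcosu]; ring
  have hcosm : Real.cos ((2*(k:ℝ)+1)*(2*u)) = 2*Real.cos ((2*(k:ℝ)+1)*u)^2 - 1 := by
    rw [show (2*(k:ℝ)+1)*(2*u) = 2*((2*(k:ℝ)+1)*u) by ring, Real.cos_two_mul]
  simp only [grovP]
  rw [hδ, hθ, hcosu, hsinδ, hcosm, hq]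
  have hlt : 0 < 1 - lam*q := by linarith
  have d1 : (4*(lam*q)*(1 - lam*q)) ≠ 0 := by positivity
  have d2 : (1 - lam*q) ≠ 0 := ne_of_gt hlt
  field_simp
  ring

open Real in
lemma hasDerivAt_G (m q x : ℝ) (hx0 : 0 < x) (hq0 : 0 < q) (hs1 : x*q < 1) :
    HasDerivAt (fun t => (1 - t)/(1 - t*q)
        * Real.cos (m * Real.arcsin (Real.sqrt (t*q)))^2)
      ((q - 1)/(1 - x*q)^2 * Real.cos (m * Real.arcsin (Real.sqrt (x*q)))^2
        - (1 - x)/(1 - x*q) * (m * q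
            * Real.sin (m * Real.arcsin (Real.sqrt (x*q)))
            * Real.cos (m * Real.arcsin (Real.sqrt (x*q)))
            / (Real.sqrt (x*q) * Real.sqrt (1 - x*q)))) x := by
  have hs0 : 0 < x*q := mul_pos hx0 hq0
  have h1s : 0 < 1 - x*q := by linarith
  have hsq0 : (0:ℝ) < Real.sqrt (x*q) := Real.sqrt_pos.2 hs0
  have hsqlt1 : Real.sqrt (x*q) < 1 := by
    rw [show (1:ℝ) = Real.sqrt 1 by simp]
    exact Real.sqrt_lt_sqrt hs0.le (by linarith)
  have hinner : HasDerivAt (fun t : ℝ => t*q) q x := by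
    simpa using (hasDerivAt_id x).mul_const q
  have hw : HasDerivAt (fun t : ℝ => Real.sqrt (t*q)) (q / (2 * Real.sqrt (x*q))) x :=
    hinner.sqrt hs0.ne'
  have hu : HasDerivAt (fun t : ℝ => Real.arcsin (Real.sqrt (t*q)))
      ((1 / Real.sqrt (1 - Real.sqrt (x*q)^2)) * (q / (2 * Real.sqrt (x*q)))) x := by
    have := (Real.hasDerivAt_arcsin (by linarith : Real.sqrt (x*q) ≠ -1)
      (ne_of_lt hsqlt1)).comp x hw
    simpa [Function.comp_def] using this
  have hsq2 : Real.sqrt (x*q)^2 = x*q := Real.sq_sqrt hs0.le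
  rw [hsq2] at hu
  have hβ : HasDerivAt (fun t : ℝ => m * Real.arcsin (Real.sqrt (t*q)))
      (m * ((1 / Real.sqrt (1 - x*q)) * (q / (2 * Real.sqrt (x*q))))) x := hu.const_mul m
  have hc : HasDerivAt (fun t : ℝ => Real.cos (m * Real.arcsin (Real.sqrt (t*q))))
      (-Real.sin (m * Real.arcsin (Real.sqrt (x*q)))
        * (m * ((1 / Real.sqrt (1 - x*q)) * (q / (2 * Real.sqrt (x*q)))))) x := hβ.cos
  have hC : HasDerivAt (fun t : ℝ => Real.cos (m * Real.arcsin (Real.sqrt (t*q)))^2)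
      (2 * Real.cos (m * Real.arcsin (Real.sqrt (x*q))) ^ 1
        * (-Real.sin (m * Real.arcsin (Real.sqrt (x*q)))
          * (m * ((1 / Real.sqrt (1 - x*q)) * (q / (2 * Real.sqrt (x*q))))))) x := hc.pow 2
  have hnum : HasDerivAt (fun t : ℝ => 1 - t) (-1 : ℝ) x := by
    simpa using (hasDerivAt_id x).const_sub 1
  have hden : HasDerivAt (fun t : ℝ => 1 - t*q) (-q) x := by
    simpa using hinner.const_sub 1
  have hh : HasDerivAt (fun t : ℝ => (1 - t)/(1 - t*q))
      (((-1) * (1 - x*q) - (1 - x) * (-q)) / (1 - x*q)^2) x :=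
    hnum.div hden (ne_of_gt h1s)
  have hG := hh.mul hC
  refine hG.congr_deriv (Eq.symm ?_)
  have hr2 : (0:ℝ) < Real.sqrt (1 - x*q) := Real.sqrt_pos.2 h1s
  have hr2sq : Real.sqrt (1 - x*q)^2 = 1 - x*q := Real.sq_sqrt h1s.le
  field_simp
  ring

set_option maxHeartbeats 1000000 in
/-- For k ≥ 2 and φ ∈ (φ_k^min, π], the function λ ↦ P_k^φ(λ) is
strictly increasing on [sin²(π/(4k+2)), λ_{k,1}^{φ,max}] and strictly decreasing
on [λ_{k,1}^{φ,max}, sin²(π/(4k−2))], where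
λ_{k,1}^{φ,max} = (1 − cos(π/(2k+1)))/(1 − cos φ). -/
theorem monotonicity_around_first_max
    (k : ℕ) (hk : 2 ≤ k) (φ : ℝ) (hφ : φ ∈ Set.Ioc (phiMin k) Real.pi)
    (lamMax : ℝ)
    (hlamMax : lamMax = (1 - Real.cos (Real.pi / (2 * (k : ℝ) + 1))) / (1 - Real.cos φ)) :
    StrictMonoOn (grovP k φ)
        (Set.Icc (Real.sin (Real.pi / (4 * (k : ℝ) + 2)) ^ 2) lamMax) ∧
      StrictAntiOn (grovP k φ)
        (Set.Icc lamMax (Real.sin (Real.pi / (4 * (k : ℝ) - 2)) ^ 2)) := by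
  obtain ⟨hφ1, hφ2⟩ := hφ
  have hπ := Real.pi_pos
  have hk2 : (2:ℝ) ≤ (k:ℝ) := by exact_mod_cast hk
  set mR : ℝ := 2*(k:ℝ)+1 with hmR
  set nR : ℝ := 2*(k:ℝ)-1 with hnR
  set θ1 : ℝ := Real.pi/(4*(k:ℝ)+2) with hθ1
  set θ2 : ℝ := Real.pi/(4*(k:ℝ)-2) with hθ2
  set α : ℝ := Real.sin θ1 ^ 2 with hα
  set b2 : ℝ := Real.sin θ2 ^ 2 with hb2
  set q : ℝ := (1 - Real.cos φ)/2 with hqdef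
  have hm5 : (5:ℝ) ≤ mR := by rw [hmR]; linarith
  have hn3 : (3:ℝ) ≤ nR := by rw [hnR]; linarith
  have hmpos : (0:ℝ) < mR := by linarith
  have hnpos : (0:ℝ) < nR := by linarith
  have hnm : nR < mR := by rw [hmR, hnR]; linarith
  have hθ1e : θ1 = Real.pi/(mR*2) := by rw [hθ1, hmR]; congr 1; ring
  have hθ2e : θ2 = Real.pi/(nR*2) := by rw [hθ2, hnR]; congr 1; ring
  have hmn2 : mR ≤ nR*2 := by rw [hmR, hnR]; linarith
  have hphiMinE : phiMin k = Real.arccos (1 - (2 - 2*Real.cos (Real.pi/mR)) / (1 - Real.cos (Real.pi/nR))) := by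
    rw [phiMin, ← hmR, ← hnR]
  have hlamMaxE : lamMax = (1 - Real.cos (Real.pi/mR)) / (1 - Real.cos φ) := hlamMax
  clear_value q b2 α θ2 θ1 nR mR
  have hθ1pos : 0 < θ1 := by rw [hθ1e]; positivity
  have hθ2pos : 0 < θ2 := by rw [hθ2e]; positivity
  have hθ12 : θ1 < θ2 := by
    rw [hθ1e, hθ2e]
    apply div_lt_div_of_pos_left hπ (by positivity) (by nlinarith)
  have hθ2le : θ2 ≤ Real.pi/6 := by
    rw [hθ2e]
    apply div_le_div_of_nonneg_left hπ.le (by norm_num) (by nlinarith)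
  have hθ2lt2 : θ2 < Real.pi/2 := lt_of_le_of_lt hθ2le (by linarith)
  have hσ1 : 0 < Real.sin θ1 := Real.sin_pos_of_pos_of_lt_pi hθ1pos (by linarith)
  have hσ2 : 0 < Real.sin θ2 := Real.sin_pos_of_pos_of_lt_pi hθ2pos (by linarith)
  have hσ2le : Real.sin θ2 ≤ 1/2 := by
    rw [← Real.sin_pi_div_six]
    exact Real.strictMonoOn_sin.monotoneOn ⟨by linarith, by linarith⟩
      ⟨by linarith, by linarith⟩ hθ2le
  have hσ12 : Real.sin θ1 < Real.sin θ2 :=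
    Real.sin_lt_sin_of_lt_of_le_pi_div_two (by linarith) hθ2lt2.le hθ12
  have hα0 : 0 < α := by rw [hα]; positivity
  have hb20 : 0 < b2 := by rw [hb2]; positivity
  have hαb2 : α < b2 := by
    rw [hα, hb2]; exact pow_lt_pow_left₀ hσ12 hσ1.le (by norm_num)
  have hb2le : b2 ≤ 1/4 := by
    rw [hb2]
    calc Real.sin θ2 ^2 ≤ (1/2:ℝ)^2 := pow_le_pow_left₀ hσ2.le hσ2le 2
    _ = 1/4 := by norm_num
  have hq1 : q ≤ 1 := by
    have := Real.neg_one_le_cos φ; rw [hqdef]; linarith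
  have hαv : 1 - Real.cos (Real.pi/mR) = 2*α := by
    rw [two_sin_sq_half (Real.pi/mR), hα]
    congr 2
    rw [hθ1e, div_div]
  have hb2v : 1 - Real.cos (Real.pi/nR) = 2*b2 := by
    rw [two_sin_sq_half (Real.pi/nR), hb2]
    congr 2
    rw [hθ2e, div_div]
  have hzval : Real.cos (phiMin k) = 1 - 2*(α/b2) := by
    rw [hphiMinE, hb2v, show (2:ℝ) - 2 * Real.cos (Real.pi/mR) = 2*(2*α) by rw [← hαv]; ring]
    have h4 : 2*(2*α)/(2*b2) = 2*(α/b2) := by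
      rw [mul_div_mul_left _ _ (two_ne_zero), mul_div_assoc]
    have hab1 : α/b2 ≤ 1 := by rw [div_le_one hb20]; linarith
    have hab0 : 0 ≤ α/b2 := by positivity
    rw [h4, Real.cos_arccos (by linarith) (by linarith)]
  have hcosφlt : Real.cos φ < Real.cos (phiMin k) :=
    Real.strictAntiOn_cos ⟨Real.arccos_nonneg _, Real.arccos_le_pi _⟩
      ⟨le_trans (Real.arccos_nonneg _) hφ1.le, hφ2⟩ hφ1
  have hqlb : α/b2 < q := by rw [hzval] at hcosφlt; rw [hqdef]; linarith
  have hq0 : 0 < q := lt_trans (by positivity) hqlb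
  have hαqb : α < q * b2 := by
    have := (div_lt_iff₀ hb20).1 hqlb; linarith [this]
  have hconc : (nR/mR) * Real.sin θ2 ≤ Real.sin θ1 := by
    have hmem0 : (0:ℝ) ∈ Set.Icc 0 Real.pi := ⟨le_refl _, hπ.le⟩
    have hmem2 : θ2 ∈ Set.Icc 0 Real.pi := ⟨hθ2pos.le, by linarith⟩
    have ha : (0:ℝ) ≤ 1 - nR/mR := by
      have : nR/mR ≤ 1 := by rw [div_le_one hmpos]; linarith
      linarith
    have hb : (0:ℝ) ≤ nR/mR := by positivity
    have := strictConcaveOn_sin_Icc.concaveOn.2 hmem0 hmem2 ha hb (by ring)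
    simp only [smul_eq_mul, mul_zero, zero_add, Real.sin_zero] at this
    rw [show nR/mR*θ2 = θ1 by rw [hθ1e, hθ2e]; field_simp] at this
    linarith
  have hnm35 : (3:ℝ)/5 ≤ nR/mR := by
    rw [div_le_div_iff₀ (by norm_num) hmpos, hmR, hnR]; linarith
  have hαlb : (nR/mR)^2 * b2 ≤ α := by
    rw [hα, hb2]
    calc (nR/mR)^2 * Real.sin θ2 ^2 = ((nR/mR) * Real.sin θ2)^2 := by ring
    _ ≤ Real.sin θ1 ^ 2 := by
        apply pow_le_pow_left₀ (by positivity) hconc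
  have hq925 : 9/25 < q := by
    have h0 : (9:ℝ)/25 ≤ (nR/mR)^2 := by
      have := pow_le_pow_left₀ (by norm_num : (0:ℝ) ≤ 3/5) hnm35 2
      calc (9:ℝ)/25 = (3/5:ℝ)^2 := by norm_num
      _ ≤ (nR/mR)^2 := this
    have h1 : (9:ℝ)/25 * b2 ≤ α :=
      le_trans (mul_le_mul_of_nonneg_right h0 hb20.le) hαlb
    have h2 : (9:ℝ)/25 * b2 < q * b2 := lt_of_le_of_lt h1 hαqb
    exact (mul_lt_mul_iff_left₀ hb20).1 h2
  have hsqq : 3/5 ≤ Real.sqrt q := by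
    rw [Real.le_sqrt (by norm_num) hq0.le]
    calc (3/5:ℝ)^2 = 9/25 := by norm_num
    _ ≤ q := hq925.le
  have hcosφval : Real.cos φ = 1 - 2*q := by rw [hqdef]; ring
  have hlamE : lamMax = α/q := by
    rw [hlamMaxE, hαv, show (1:ℝ) - Real.cos φ = 2*q by rw [hcosφval]; ring,
      mul_div_mul_left _ _ (two_ne_zero)]
  have hlamge : α ≤ lamMax := by
    rw [hlamE, le_div_iff₀ hq0]
    calc α * q ≤ α * 1 := mul_le_mul_of_nonneg_left hq1 hα0.le
    _ = α := mul_one α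
  have hlamlt : lamMax < b2 := by
    rw [hlamE, div_lt_iff₀ hq0, mul_comm]
    exact (div_lt_iff₀ hb20).1 hqlb
  have hlam0 : 0 < lamMax := by rw [hlamE]; positivity
  set G : ℝ → ℝ := fun t => (1 - t)/(1 - t*q)
      * Real.cos (mR * Real.arcsin (Real.sqrt (t*q)))^2 with hGdef
  have hs14 : ∀ t : ℝ, 0 ≤ t → t ≤ b2 → t*q ≤ 1/4 := by
    intro t h1 h2
    calc t*q ≤ (1/4)*1 := mul_le_mul (by linarith) hq1 hq0.le (by norm_num)
    _ = 1/4 := by norm_num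
  have hEq : ∀ t : ℝ, 0 < t → t ≤ b2 → grovP k φ t = 1 - G t := by
    intro t ht0 htb
    have h14 := hs14 t ht0.le htb
    have := grovP_eq k φ t q hcosφval ht0 (by linarith) hq0 (by linarith)
    rw [← hmR] at this
    rw [hGdef]
    exact this
  have hGcont : ContinuousOn G (Set.Icc 0 b2) := by
    rw [hGdef]
    apply ContinuousOn.mul
    · apply ContinuousOn.div
      · exact (continuous_const.sub continuous_id).continuousOn
      · exact (continuous_const.sub (continuous_id.mul continuous_const)).continuousOn
      · intro t ht
        have := hs14 t ht.1 ht.2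
        exact ne_of_gt (by linarith)
    · apply Continuous.continuousOn
      apply Continuous.pow
      exact Real.continuous_cos.comp (continuous_const.mul
        (Real.continuous_arcsin.comp (Real.continuous_sqrt.comp
          (continuous_id.mul continuous_const))))
  -- Part A : G strictly decreasing on [α, lamMax]
  have hGanti : StrictAntiOn G (Set.Icc α lamMax) := by
    apply strictAntiOn_of_deriv_neg (convex_Icc _ _)
      (hGcont.mono (fun t ht => ⟨le_trans hα0.le ht.1, le_trans ht.2 hlamlt.le⟩))
    intro x hx
    rw [interior_Icc] at hx
    obtain ⟨hx1, hx2⟩ := hx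
    have hx0 : 0 < x := lt_trans hα0 hx1
    have hxb : x < b2 := lt_trans hx2 hlamlt
    have hxq14 : x*q ≤ 1/4 := hs14 x hx0.le hxb.le
    have hxq1 : x*q < 1 := by linarith
    have hsxq : 0 < x*q := mul_pos hx0 hq0
    have hD := (hasDerivAt_G mR q x hx0 hq0 hxq1).deriv
    rw [hGdef, hD]
    have hαgt : x*q < α := by
      rw [hlamE] at hx2
      exact (lt_div_iff₀ hq0).1 hx2
    have hsqlt : Real.sqrt (x*q) < Real.sin θ1 := by
      have := Real.sqrt_lt_sqrt hsxq.le hαgt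
      rwa [hα, Real.sqrt_sq hσ1.le] at this
    have harc : Real.arcsin (Real.sqrt (x*q)) < θ1 := by
      have hm1 : Real.sqrt (x*q) ∈ Set.Icc (-1:ℝ) 1 :=
        ⟨by linarith [Real.sqrt_nonneg (x*q)], by linarith [Real.sin_le_one θ1]⟩
      have hm2 : Real.sin θ1 ∈ Set.Icc (-1:ℝ) 1 :=
        ⟨by linarith [Real.sin_le_one θ1], Real.sin_le_one θ1⟩
      have := Real.strictMonoOn_arcsin hm1 hm2 hsqlt
      rwa [Real.arcsin_sin (by linarith) (by linarith [hθ2lt2])] at this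
    have hmθ1 : mR*θ1 = Real.pi/2 := by
      rw [hθ1e]; field_simp
    set β := mR * Real.arcsin (Real.sqrt (x*q)) with hβd
    have hβpos : 0 < β := by
      apply mul_pos hmpos
      exact Real.arcsin_pos.2 (Real.sqrt_pos.2 hsxq)
    have hβlt : β < Real.pi/2 := by
      rw [← hmθ1, hβd]
      exact mul_lt_mul_of_pos_left harc hmpos
    have hcb : 0 < Real.cos β := Real.cos_pos_of_mem_Ioo ⟨by linarith, hβlt⟩
    have hsb : 0 < Real.sin β := Real.sin_pos_of_pos_of_lt_pi hβpos (by linarith)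
    have hr1 : 0 < Real.sqrt (x*q) := Real.sqrt_pos.2 hsxq
    have hr2 : 0 < Real.sqrt (1-x*q) := Real.sqrt_pos.2 (by linarith)
    have h2pos : 0 < (1 - x)/(1 - x*q)
        * (mR*q*Real.sin β*Real.cos β/(Real.sqrt (x*q)*Real.sqrt (1-x*q))) := by
      apply mul_pos (div_pos (by linarith) (by linarith))
      exact div_pos (mul_pos (mul_pos (mul_pos hmpos hq0) hsb) hcb) (mul_pos hr1 hr2)
    have h1np : (q-1)/(1-x*q)^2 * Real.cos β^2 ≤ 0 := by
      apply mul_nonpos_of_nonpos_of_nonneg _ (sq_nonneg _)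
      apply div_nonpos_of_nonpos_of_nonneg (by linarith)
      positivity
    linarith only [h2pos, h1np]
  -- Part B : G strictly increasing on [lamMax, b2]
  have hGmono : StrictMonoOn G (Set.Icc lamMax b2) := by
    apply strictMonoOn_of_deriv_pos (convex_Icc _ _)
      (hGcont.mono (fun t ht => ⟨le_trans hlam0.le ht.1, ht.2⟩))
    intro x hx
    rw [interior_Icc] at hx
    obtain ⟨hx1, hx2⟩ := hx
    have hx0 : 0 < x := lt_trans hlam0 hx1
    have hxq14 : x*q ≤ 1/4 := hs14 x hx0.le hx2.le
    have hxq1 : x*q < 1 := by linarith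
    have hsxq : 0 < x*q := mul_pos hx0 hq0
    have hD := (hasDerivAt_G mR q x hx0 hq0 hxq1).deriv
    rw [hGdef, hD]
    have hαxq : α < x*q := by
      rw [hlamE] at hx1
      exact (div_lt_iff₀ hq0).1 hx1
    have hxqb : x*q < b2 := by
      have hle : x*q ≤ x*1 := mul_le_mul_of_nonneg_left hq1 hx0.le
      rw [mul_one] at hle
      linarith
    have hgt : Real.sin θ1 < Real.sqrt (x*q) := by
      have := Real.sqrt_lt_sqrt hα0.le hαxq
      rwa [hα, Real.sqrt_sq hσ1.le] at this
    have hlt2 : Real.sqrt (x*q) < Real.sin θ2 := by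
      have := Real.sqrt_lt_sqrt hsxq.le hxqb
      rwa [hb2, Real.sqrt_sq hσ2.le] at this
    have hsqle1 : Real.sqrt (x*q) ≤ 1 := by linarith
    have harc1 : θ1 < Real.arcsin (Real.sqrt (x*q)) := by
      have hm1 : Real.sin θ1 ∈ Set.Icc (-1:ℝ) 1 :=
        ⟨by linarith [Real.sin_le_one θ1], Real.sin_le_one θ1⟩
      have hm2 : Real.sqrt (x*q) ∈ Set.Icc (-1:ℝ) 1 :=
        ⟨by linarith [Real.sqrt_nonneg (x*q)], hsqle1⟩
      have := Real.strictMonoOn_arcsin hm1 hm2 hgt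
      rwa [Real.arcsin_sin (by linarith) (by linarith [hθ2lt2])] at this
    have harc2 : Real.arcsin (Real.sqrt (x*q)) < θ2 := by
      have hm1 : Real.sqrt (x*q) ∈ Set.Icc (-1:ℝ) 1 :=
        ⟨by linarith [Real.sqrt_nonneg (x*q)], hsqle1⟩
      have hm2 : Real.sin θ2 ∈ Set.Icc (-1:ℝ) 1 :=
        ⟨by linarith [Real.sin_le_one θ2], Real.sin_le_one θ2⟩
      have := Real.strictMonoOn_arcsin hm1 hm2 hlt2
      rwa [Real.arcsin_sin (by linarith) (by linarith)] at this
    have hmθ1 : mR*θ1 = Real.pi/2 := by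
      rw [hθ1e]; field_simp
    set β := mR * Real.arcsin (Real.sqrt (x*q)) with hβd
    have hβgt : Real.pi/2 < β := by
      rw [← hmθ1, hβd]
      exact mul_lt_mul_of_pos_left harc1 hmpos
    have hβltmθ2 : β < mR*θ2 := by
      rw [hβd]; exact mul_lt_mul_of_pos_left harc2 hmpos
    have hπθ2 : Real.pi = (nR*2)*θ2 := by
      rw [hθ2e]; field_simp
    have hmθ2le : mR*θ2 ≤ Real.pi := by
      rw [hπθ2]
      exact mul_le_mul_of_nonneg_right hmn2 hθ2pos.le
    have hβπ : β < Real.pi := lt_of_lt_of_le hβltmθ2 hmθ2le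
    have hsb : 0 < Real.sin β := Real.sin_pos_of_pos_of_lt_pi (by linarith) hβπ
    have hcb : Real.cos β < 0 := Real.cos_neg_of_pi_div_two_lt_of_lt hβgt (by linarith)
    have hmθ12 : mR*θ1 < mR*θ2 := mul_lt_mul_of_pos_left hθ12 hmpos
    have hsinβ2 : Real.sin θ2 < Real.sin β := by
      have h2nm : mR + 1 ≤ nR*2 := by rw [hmR, hnR]; linarith
      have h4 : θ2 ≤ Real.pi - mR*θ2 := by
        have := mul_le_mul_of_nonneg_right h2nm hθ2pos.le
        rw [hπθ2]; linarith only [this]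
      have h3 : Real.sin (Real.pi - mR*θ2) < Real.sin (Real.pi - β) :=
        Real.sin_lt_sin_of_lt_of_le_pi_div_two (by linarith) (by linarith) (by linarith)
      have h5 : Real.sin θ2 ≤ Real.sin (Real.pi - mR*θ2) := by
        apply Real.strictMonoOn_sin.monotoneOn ⟨by linarith, by linarith⟩
          ⟨by linarith, by linarith⟩ h4
      have h6 : Real.sin (Real.pi - β) = Real.sin β := Real.sin_pi_sub β
      linarith
    set r1 := Real.sqrt (x*q) with hr1d
    set r2 := Real.sqrt (1 - x*q) with hr2d
    have hr1pos : 0 < r1 := Real.sqrt_pos.2 hsxq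
    have hr2pos : 0 < r2 := Real.sqrt_pos.2 (by linarith)
    have hr2le1 : r2 ≤ 1 := by
      rw [hr2d]
      exact Real.sqrt_le_one.2 (by linarith)
    have hr1le : r1 ≤ Real.sqrt q * Real.sin θ2 := by
      rw [hr1d, show x*q = q*x by ring, Real.sqrt_mul hq0.le]
      apply mul_le_mul_of_nonneg_left _ (Real.sqrt_nonneg q)
      have := Real.sqrt_lt_sqrt hx0.le hx2
      rw [hb2, Real.sqrt_sq hσ2.le] at this
      exact this.le
    have hqsq : Real.sqrt q * Real.sqrt q = q := Real.mul_self_sqrt hq0.le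
    have hcbpos : 0 < -Real.cos β := by linarith
    have hcb1 : -Real.cos β ≤ 1 := by linarith [Real.neg_one_le_cos β]
    have hx34 : (3:ℝ)/4 ≤ 1 - x := by linarith
    have hs34 : (3:ℝ)/4 ≤ 1 - x*q := by linarith
    -- key inequality
    have a3 : (-Real.cos β)*(r1*r2) ≤ r1 := by
      calc (-Real.cos β)*(r1*r2) ≤ 1*(r1*r2) :=
            mul_le_mul_of_nonneg_right hcb1 (by positivity)
      _ = r1*r2 := one_mul _
      _ ≤ r1*1 := mul_le_mul_of_nonneg_left hr2le1 hr1pos.le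
      _ = r1 := mul_one _
    have s1 : (1-q)*((-Real.cos β)*(r1*r2)) ≤ r1 := by
      calc (1-q)*((-Real.cos β)*(r1*r2)) ≤ 1*((-Real.cos β)*(r1*r2)) :=
            mul_le_mul_of_nonneg_right (by linarith)
              (mul_nonneg hcbpos.le (by positivity))
      _ = (-Real.cos β)*(r1*r2) := one_mul _
      _ ≤ r1 := a3
    have s3 : Real.sqrt q * Real.sin θ2 < (45/16)*(q*Real.sin θ2) := by
      have h1 : Real.sqrt q < (45/16)*q := by
        have h2 : (3/5)*Real.sqrt q ≤ Real.sqrt q * Real.sqrt q :=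
          mul_le_mul_of_nonneg_right hsqq (Real.sqrt_nonneg q)
        rw [hqsq] at h2
        linarith only [h2, hq0]
      have h3 := mul_lt_mul_of_pos_right h1 hσ2
      linarith only [h3]
    have t1 : (9:ℝ)/16 ≤ (1-x)*(1-x*q) := by
      calc (9:ℝ)/16 = (3/4:ℝ)*(3/4) := by norm_num
      _ ≤ (1-x)*(1-x*q) := mul_le_mul hx34 hs34 (by norm_num) (by linarith only [hx34])
    have u1 : (5:ℝ)*(q*Real.sin θ2) ≤ mR*(q*Real.sin β) := by
      have v1 : q*Real.sin θ2 ≤ q*Real.sin β := mul_le_mul_of_nonneg_left hsinβ2.le hq0.le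
      have v2 : (5:ℝ)*(q*Real.sin β) ≤ mR*(q*Real.sin β) :=
        mul_le_mul_of_nonneg_right hm5 (by positivity)
      linarith
    have t2 : (45:ℝ)/16*(q*Real.sin θ2) ≤ (1-x)*(mR*q*Real.sin β*(1-x*q)) := by
      calc (45:ℝ)/16*(q*Real.sin θ2) = (9/16)*(5*(q*Real.sin θ2)) := by ring
      _ ≤ (9/16)*(mR*(q*Real.sin β)) := by linarith only [u1]
      _ ≤ ((1-x)*(1-x*q))*(mR*(q*Real.sin β)) := by
          apply mul_le_mul_of_nonneg_right t1
          positivity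
      _ = (1-x)*(mR*q*Real.sin β*(1-x*q)) := by ring
    have hKEY : (1-q)*((-Real.cos β)*(r1*r2)) < (1-x)*(mR*q*Real.sin β*(1-x*q)) := by
      calc (1-q)*((-Real.cos β)*(r1*r2)) ≤ r1 := s1
      _ ≤ Real.sqrt q * Real.sin θ2 := hr1le
      _ < (45/16)*(q*Real.sin θ2) := s3
      _ ≤ (1-x)*(mR*q*Real.sin β*(1-x*q)) := t2
    have hrewrite : (q - 1)/(1 - x*q)^2 * Real.cos β^2
        - (1 - x)/(1 - x*q) * (mR*q*Real.sin β*Real.cos β/(r1*r2))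
        = ((-Real.cos β) * ((1-x)*(mR*q*Real.sin β*(1-x*q))
            - (1-q)*((-Real.cos β)*(r1*r2)))) / ((1-x*q)^2*(r1*r2)) := by
      field_simp
      ring
    rw [hrewrite]
    apply div_pos (mul_pos hcbpos (by linarith)) (by positivity)
  -- combine
  refine ⟨?_, ?_⟩
  · intro x hx y hy hxy
    rw [hEq x (lt_of_lt_of_le hα0 hx.1) (le_trans hx.2 hlamlt.le),
      hEq y (lt_of_lt_of_le hα0 hy.1) (le_trans hy.2 hlamlt.le)]
    have := hGanti hx hy hxy
    linarith
  · intro x hx y hy hxy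
    rw [hEq x (lt_of_lt_of_le hlam0 hx.1) hx.2,
      hEq y (lt_of_lt_of_le hlam0 hy.1) hy.2]
    have := hGmono hx hy hxy
    linarith
end

section
/- Fix an integer k ≥ 1, let φ_k^min = arccos(1 − (2 − 2cos(π/(2k+1)))/(1 − cos(π/(2k−1)))), and let λ₀ = sin²(π/(4k+2)) be the left endpoint of Λ_k. Then the function φ ↦ P_k^φ(λ₀) is strictly increasing on (φ_k^min, π], and P_k^π(λ₀) = 1. -/
/-- Closed form: `P = 1 - (1-λ)(1+cos((2k+1)δ))/(1+cos δ)`. -/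
theorem grovP_eq_s17 (k : ℕ) (lam φ : ℝ) (hl0 : 0 < lam) (hl1 : lam < 1)
    (hφ0 : 0 < φ) (hφπ : φ ≤ Real.pi) :
    grovP k φ lam = 1 - (1 - lam) *
      ((1 + Real.cos ((2 * (k:ℝ) + 1) * Real.arccos (1 - lam * (1 - Real.cos φ)))) /
        (1 + Real.cos (Real.arccos (1 - lam * (1 - Real.cos φ))))) := by
  unfold grovP
  have hcφ1 : Real.cos φ < 1 := by
    have := Real.cos_lt_cos_of_nonneg_of_le_pi le_rfl hφπ hφ0
    simpa using this
  have hcφ2 : -1 ≤ Real.cos φ := Real.neg_one_le_cos φ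
  set c : ℝ := 1 - lam * (1 - Real.cos φ) with hc
  have hc1 : c < 1 := by nlinarith
  have hc2 : -1 < c := by nlinarith
  have hcosδ : Real.cos (Real.arccos c) = c := Real.cos_arccos hc2.le hc1.le
  have hsinδ : Real.sin (Real.arccos c) ^ 2 = 1 - c ^ 2 := by
    rw [Real.sin_arccos, Real.sq_sqrt (by nlinarith)]
  have hsθ : Real.sin (Real.arcsin (Real.sqrt lam)) ^ 2 = lam := by
    rw [Real.sin_arcsin (le_trans (by norm_num) (Real.sqrt_nonneg lam))
      (Real.sqrt_le_one.mpr hl1.le), Real.sq_sqrt hl0.le]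
  simp only [hcosδ, hsinδ, hsθ]
  have h1 : 1 - c ^ 2 ≠ 0 := by nlinarith
  have h2 : 1 + c ≠ 0 := by nlinarith
  field_simp
  rw [hc]
  ring_nf

set_option maxHeartbeats 1000000 in
theorem ratio_anti (m : ℝ) (hm : 3 ≤ m) (δ1 δ2 : ℝ) (h0 : 0 < δ1) (h12 : δ1 < δ2)
    (h2 : m * δ2 ≤ Real.pi) :
    (1 + Real.cos (m * δ2)) / (1 + Real.cos δ2) <
      (1 + Real.cos (m * δ1)) / (1 + Real.cos δ1) := by
  have hπ := Real.pi_pos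
  set a1 := δ1 / 2 with ha1
  set a2 := δ2 / 2 with ha2
  set b1 := m * δ1 / 2 with hb1
  set b2 := m * δ2 / 2 with hb2
  have ha1' : 0 < a1 := by positivity
  have hd2 : δ2 < Real.pi / 2 := by nlinarith
  have hb2' : b2 ≤ Real.pi / 2 := by rw [hb2]; linarith
  have hab1 : a1 < b1 := by rw [ha1, hb1]; nlinarith
  have hab2 : a2 < b2 := by rw [ha2, hb2]; nlinarith
  have hb12 : b1 < b2 := by rw [hb1, hb2]; nlinarith
  have hca1 : 0 < Real.cos a1 := Real.cos_pos_of_mem_Ioo ⟨by linarith, by nlinarith⟩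
  have hca2 : 0 < Real.cos a2 := Real.cos_pos_of_mem_Ioo ⟨by linarith, by nlinarith⟩
  have hcb1 : 0 < Real.cos b1 := Real.cos_pos_of_mem_Ioo ⟨by linarith, by linarith [hb12, hb2']⟩
  have hcb2 : 0 ≤ Real.cos b2 := Real.cos_nonneg_of_mem_Icc ⟨by linarith, hb2'⟩
  have key : Real.cos b2 * Real.cos a1 < Real.cos b1 * Real.cos a2 := by
    have e1 : Real.cos b1 * Real.cos a2 =
        (Real.cos (b1 - a2) + Real.cos (b1 + a2)) / 2 := by
      rw [Real.cos_sub, Real.cos_add]; ring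
    have e2 : Real.cos b2 * Real.cos a1 =
        (Real.cos (b2 - a1) + Real.cos (b2 + a1)) / 2 := by
      rw [Real.cos_sub, Real.cos_add]; ring
    have hstrict : Real.cos (b2 + a1) < Real.cos (b1 + a2) := by
      apply Real.cos_lt_cos_of_nonneg_of_le_pi (by linarith) (by linarith) (by nlinarith)
    have hweak : Real.cos (b2 - a1) ≤ Real.cos (b1 - a2) := by
      have habs : |b1 - a2| ≤ b2 - a1 := by
        rw [abs_le]; constructor <;> nlinarith
      calc Real.cos (b2 - a1) ≤ Real.cos |b1 - a2| :=
            Real.cos_le_cos_of_nonneg_of_le_pi (abs_nonneg _) (by linarith) habs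
        _ = Real.cos (b1 - a2) := Real.cos_abs _
    rw [e1, e2]; linarith
  have hsq : (Real.cos b2) ^ 2 * (Real.cos a1) ^ 2 < (Real.cos b1) ^ 2 * (Real.cos a2) ^ 2 := by
    nlinarith [mul_nonneg hcb2 hca1.le, mul_pos hcb1 hca2]
  have hh : ∀ x : ℝ, 1 + Real.cos x = 2 * Real.cos (x / 2) ^ 2 := by
    intro x
    have := Real.cos_sq (x / 2)
    rw [this]; ring_nf
  rw [hh (m * δ2), hh δ2, hh (m * δ1), hh δ1]
  rw [div_lt_div_iff₀ (by positivity) (by positivity)]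
  rw [show Real.cos (m * δ2 / 2) = Real.cos b2 from by rw [hb2],
    show Real.cos (m * δ1 / 2) = Real.cos b1 from by rw [hb1],
    show Real.cos (δ1 / 2) = Real.cos a1 from by rw [ha1],
    show Real.cos (δ2 / 2) = Real.cos a2 from by rw [ha2]]
  nlinarith [hsq]

set_option maxHeartbeats 2000000 in
/-- For k ≥ 1 and λ₀ = sin²(π/(4k+2)), the function
φ ↦ P_k^φ(λ₀) is strictly increasing on (φ_k^min, π], and P_k^π(λ₀) = 1. -/
theorem left_endpoint_probability_increasing_in_phase
    (k : ℕ) (hk : 1 ≤ k) (lam₀ : ℝ)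
    (hlam₀ : lam₀ = Real.sin (Real.pi / (4 * (k : ℝ) + 2)) ^ 2) :
    StrictMonoOn (fun φ => grovP k φ lam₀) (Set.Ioc (phiMin k) Real.pi) ∧
      grovP k Real.pi lam₀ = 1 := by
  have hπ := Real.pi_pos
  have hk1 : (1 : ℝ) ≤ (k : ℝ) := by exact_mod_cast hk
  set a : ℝ := Real.pi / (4 * (k : ℝ) + 2) with ha
  have hden : (0:ℝ) < 4 * (k : ℝ) + 2 := by linarith
  have ha0 : 0 < a := by positivity
  have ha6 : a ≤ Real.pi / 6 := by
    rw [ha, div_le_div_iff₀ hden (by norm_num)]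
    nlinarith
  have hsin0 : 0 < Real.sin a := Real.sin_pos_of_pos_of_lt_pi ha0 (by nlinarith)
  have hsin1 : Real.sin a < 1 := by
    have := Real.sin_lt_sin_of_lt_of_le_pi_div_two (x := a) (y := Real.pi / 2)
      (by linarith) le_rfl (by nlinarith)
    simpa using this
  have hl0 : 0 < lam₀ := by rw [hlam₀]; positivity
  have hl1 : lam₀ < 1 := by rw [hlam₀]; nlinarith
  -- cos (2a) = 1 - 2 lam₀
  have hcos2a : Real.cos (2 * a) = 1 - 2 * lam₀ := by
    rw [Real.cos_two_mul, hlam₀]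
    nlinarith [Real.sin_sq_add_cos_sq a]
  have h2aπ : 2 * a ≤ Real.pi := by nlinarith
  have hm2a : (2 * (k : ℝ) + 1) * (2 * a) = Real.pi := by
    rw [ha]; field_simp; ring
  -- δ at φ = π
  have hδπ : Real.arccos (1 - lam₀ * (1 - Real.cos Real.pi)) = 2 * a := by
    rw [Real.cos_pi, show 1 - lam₀ * (1 - (-1)) = 1 - 2 * lam₀ by ring, ← hcos2a,
      Real.arccos_cos (by linarith) h2aπ]
  constructor
  · intro φ1 hφ1 φ2 hφ2 hlt
    have hmin0 : 0 ≤ phiMin k := Real.arccos_nonneg _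
    have hφ10 : 0 < φ1 := lt_of_le_of_lt hmin0 hφ1.1
    have hφ20 : 0 < φ2 := lt_trans hφ10 hlt
    have hφ2π : φ2 ≤ Real.pi := hφ2.2
    have hφ1π : φ1 ≤ Real.pi := le_trans hlt.le hφ2π
    have hcoslt : Real.cos φ2 < Real.cos φ1 :=
      Real.cos_lt_cos_of_nonneg_of_le_pi hφ10.le hφ2π hlt
    have hcφ1 : Real.cos φ1 < 1 := by
      have := Real.cos_lt_cos_of_nonneg_of_le_pi le_rfl hφ1π hφ10
      simpa using this
    have hcφ2' : -1 ≤ Real.cos φ2 := Real.neg_one_le_cos φ2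
    set c1 : ℝ := 1 - lam₀ * (1 - Real.cos φ1) with hc1
    set c2 : ℝ := 1 - lam₀ * (1 - Real.cos φ2) with hc2
    have hc21 : c2 < c1 := by rw [hc1, hc2]; nlinarith
    have hc11 : c1 < 1 := by rw [hc1]; nlinarith
    have hc2lb : 1 - 2 * lam₀ ≤ c2 := by rw [hc2]; nlinarith
    have hc2m1 : -1 ≤ c2 := by nlinarith
    set δ1 := Real.arccos c1 with hδ1
    set δ2 := Real.arccos c2 with hδ2
    have hδ1pos : 0 < δ1 := Real.arccos_pos.mpr hc11
    have hδlt : δ1 < δ2 := by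
      rw [hδ1, hδ2]
      exact Real.strictAntiOn_arccos ⟨hc2m1, by linarith⟩ ⟨by linarith, hc11.le⟩ hc21
    have hδ2ub : δ2 ≤ 2 * a := by
      rw [hδ2, ← Real.arccos_cos (by linarith : (0:ℝ) ≤ 2 * a) h2aπ]
      rcases le_or_gt c2 (Real.cos (2 * a)) with h | h
      · have : c2 = Real.cos (2 * a) := le_antisymm h (by rw [hcos2a]; exact hc2lb)
        rw [this]
      · exact (Real.strictAntiOn_arccos ⟨by rw [hcos2a]; linarith, by
          nlinarith [Real.cos_le_one (2*a)]⟩ ⟨hc2m1, hc11.le.trans_lt' hc21 |>.le⟩ h).le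
    have hmδ2 : (2 * (k : ℝ) + 1) * δ2 ≤ Real.pi := by
      rw [← hm2a]
      have : (0:ℝ) < 2 * (k : ℝ) + 1 := by linarith
      nlinarith
    have h1 := grovP_eq_s17 k lam₀ φ1 hl0 hl1 hφ10 hφ1π
    have h2 := grovP_eq_s17 k lam₀ φ2 hl0 hl1 hφ20 hφ2π
    simp only []
    rw [h1, h2, ← hc1, ← hc2, ← hδ1, ← hδ2]
    have hratio := ratio_anti (2 * (k : ℝ) + 1) (by linarith) δ1 δ2 hδ1pos hδlt hmδ2
    have hcosδ1 : Real.cos δ1 = c1 := Real.cos_arccos (by linarith) hc11.le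
    have hcosδ2 : Real.cos δ2 = c2 := Real.cos_arccos hc2m1 (by linarith)
    rw [hcosδ1, hcosδ2]
    rw [hcosδ1, hcosδ2] at hratio
    nlinarith [hratio]
  · rw [grovP_eq_s17 k lam₀ Real.pi hl0 hl1 hπ le_rfl, hδπ, hm2a, Real.cos_pi]
    norm_num
end
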